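/- Let X ∈ ℝ^{n×k} satisfy XᵀAX = J and let X⊥ ∈ ℝ^{n×(n−k)} be a full-rank matrix with XᵀX⊥ = 0. Then the matrix E = [X, A⁻¹X⊥] ∈ ℝ^{n×n} is invertible, with inverse given by stacking JXᵀA on top of (X⊥ᵀA⁻¹X⊥)⁻¹X⊥ᵀ. -/

import Mathlib

open Matrix

/-- For `X` with `Xᵀ A X = J` and a full-rank `X⊥` with `Xᵀ X⊥ = 0`, the matrix
`E = [X, A⁻¹X⊥]` is invertible, with inverse obtained by stacking `J Xᵀ A` on top of
`(X⊥ᵀ A⁻¹ X⊥)⁻¹ X⊥ᵀ`. -/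
theorem stmt_1 {n k : ℕ} (A : Matrix (Fin n) (Fin n) ℝ) (J : Matrix (Fin k) (Fin k) ℝ)
    (hA : Aᵀ = A) (hAinv : IsUnit A.det) (hJ : Jᵀ = J) (hJ2 : J * J = 1)
    (X : Matrix (Fin n) (Fin k) ℝ) (hX : Xᵀ * A * X = J)
    (Xp : Matrix (Fin n) (Fin (n - k)) ℝ) (hXp : Xp.rank = n - k)
    (hperp : Xᵀ * Xp = 0) (hXpinv : IsUnit (Xpᵀ * A⁻¹ * Xp).det) :
    fromCols X (A⁻¹ * Xp) * fromRows (J * Xᵀ * A) ((Xpᵀ * A⁻¹ * Xp)⁻¹ * Xpᵀ) = 1 ∧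
    fromRows (J * Xᵀ * A) ((Xpᵀ * A⁻¹ * Xp)⁻¹ * Xpᵀ) * fromCols X (A⁻¹ * Xp) = 1 := by
  have hJu : IsUnit J := ⟨⟨J, J, hJ2, hJ2⟩, rfl⟩
  have hk : k ≤ n := by
    have h1 := J.rank_of_isUnit hJu
    have h2 : J.rank ≤ n := by
      rw [← hX]
      exact le_trans (rank_mul_le_right _ _)
        (le_trans X.rank_le_card_height (by simp))
    simpa [h1] using h2
  have e : Fin n ≃ Fin k ⊕ Fin (n - k) :=
    (finCongr (Nat.add_sub_cancel' hk).symm).trans finSumFinEquiv.symm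
  have hAA : A * A⁻¹ = 1 := mul_nonsing_inv A hAinv
  have hperp' : Xpᵀ * X = 0 := by
    have := congrArg transpose hperp
    simpa [transpose_mul] using this
  have key : fromRows (J * Xᵀ * A) ((Xpᵀ * A⁻¹ * Xp)⁻¹ * Xpᵀ) *
      fromCols X (A⁻¹ * Xp) = 1 := by
    have b11 : J * Xᵀ * A * X = 1 := by
      rw [Matrix.mul_assoc J Xᵀ A, Matrix.mul_assoc J, hX, hJ2]
    have b12 : J * Xᵀ * A * (A⁻¹ * Xp) = 0 := by
      rw [Matrix.mul_assoc (J * Xᵀ) A, ← Matrix.mul_assoc A, hAA, Matrix.one_mul, Matrix.mul_assoc J, hperp, Matrix.mul_zero]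
    have b21 : (Xpᵀ * A⁻¹ * Xp)⁻¹ * Xpᵀ * X = 0 := by
      rw [Matrix.mul_assoc, hperp', Matrix.mul_zero]
    have b22 : (Xpᵀ * A⁻¹ * Xp)⁻¹ * Xpᵀ * (A⁻¹ * Xp) = 1 := by
      rw [Matrix.mul_assoc, ← Matrix.mul_assoc Xpᵀ, nonsing_inv_mul _ hXpinv]
    rw [fromRows_mul_fromCols, b11, b12, b21, b22, fromBlocks_one]
  exact ⟨(fromCols_mul_fromRows_eq_one_comm e _ _ _ _).mpr key, key⟩
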